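/- Assume R is simply-laced. Let μ ∈ X be dominant and let β∨ be a positive coroot of the relative coroot system R' (i.e. β∨ = ρ(γ₀∨) for some positive coroot γ₀∨ of R) such that ν' := ρ(μ) − β∨ is dominant, meaning that the image of ν' in the σ-invariants of X⊗ℝ pairs nonnegatively with every simple root α_i. Then there exists an element ν ∈ 𝒫_μ such that ρ(ν) = ρ(μ) − β∨. -/

import Mathlib

/-!
Common setup: an abstract reduced irreducible crystallographic root system `R`
inside a real inner product space `E`, with simple roots `α i` (`i : ι`) forming
a basis of `E`, Weyl group generated by the reflections in the roots
(equivalently, by the simple reflections), coroot pairing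
`⟨x, a∨⟩ = 2 (x, a) / (a, a)`, weight lattice `P(R)`, root lattices `Q(R)`,
`Q(R_J)`, etc.
-/

open scoped BigOperators

noncomputable section

/-- the pairing `⟨x, a∨⟩ = 2 (x, a)/(a, a)` of `x` with the coroot of `a`. -/
def pairR {E : Type} [NormedAddCommGroup E] [InnerProductSpace ℝ E] (x a : E) : ℝ :=
  2 * (inner ℝ x a : ℝ) / (inner ℝ a a : ℝ)

/-- the reflection in (the hyperplane orthogonal to) `a`. -/
def reflFun {E : Type} [NormedAddCommGroup E] [InnerProductSpace ℝ E] (a : E) (x : E) : E :=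
  x - pairR x a • a

/-- A reduced irreducible crystallographic root system in a real inner product
space `E`, whose set of simple roots `simple : ι → E` is a basis of `E`. -/
structure RootSystemCtx (ι E : Type) [Fintype ι] [DecidableEq ι]
    [NormedAddCommGroup E] [InnerProductSpace ℝ E] : Type where
  Roots : Set E
  simple : ι → E
  simple_mem : ∀ i, simple i ∈ Roots
  finite : Roots.Finite
  ne_zero : ∀ a ∈ Roots, a ≠ 0
  reduced : ∀ a ∈ Roots, ∀ t : ℝ, t • a ∈ Roots → t = 1 ∨ t = -1
  crystal : ∀ a ∈ Roots, ∀ b ∈ Roots, ∃ n : ℤ, pairR a b = (n : ℝ)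
  refl_stable : ∀ a ∈ Roots, ∀ b ∈ Roots, reflFun b a ∈ Roots
  indep : LinearIndependent ℝ simple
  span_top : Submodule.span ℝ (Set.range simple) = ⊤
  pos_neg : ∀ a ∈ Roots, (∃ c : ι → ℕ, a = ∑ i, (c i : ℝ) • simple i) ∨
      (∃ c : ι → ℕ, a = -∑ i, (c i : ℝ) • simple i)
  irred : ∀ R1 R2 : Set E, Roots = R1 ∪ R2 →
      (∀ a ∈ R1, ∀ b ∈ R2, (inner ℝ a b : ℝ) = 0) → R1 = ∅ ∨ R2 = ∅

namespace RootSystemCtx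

variable {ι E : Type} [Fintype ι] [DecidableEq ι]
  [NormedAddCommGroup E] [InnerProductSpace ℝ E]
variable (S : RootSystemCtx ι E)

/-- `R` is simply laced: `⟨a, b∨⟩ ∈ {-1, 0, 1}` for roots `b ≠ ± a`. -/
def SimplyLaced : Prop :=
  ∀ a ∈ S.Roots, ∀ b ∈ S.Roots, b ≠ a → b ≠ -a →
    pairR a b = -1 ∨ pairR a b = 0 ∨ pairR a b = 1

/-- membership in the weight lattice `P(R)`. -/
def IsWeight (x : E) : Prop := ∀ a ∈ S.Roots, ∃ n : ℤ, pairR x a = (n : ℝ)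

/-- `x` is dominant: `⟨x, αᵢ∨⟩ ≥ 0` for all simple roots. -/
def IsDominant (x : E) : Prop := ∀ i, 0 ≤ pairR x (S.simple i)

/-- positive roots: roots that are nonnegative combinations of simple roots. -/
def IsPositiveRoot (a : E) : Prop :=
  a ∈ S.Roots ∧ ∃ c : ι → ℕ, a = ∑ i, (c i : ℝ) • S.simple i

/-- the root lattice `Q(R)`. -/
def rootLattice : AddSubgroup E := AddSubgroup.closure S.Roots

/-- the root lattice `Q(R_J)` of the sub-root system `R_J`. -/
def rootLatticeJ (J : Finset ι) : AddSubgroup E :=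
  AddSubgroup.closure (S.simple '' ↑J)

/-- the sub-root system `R_J` determined by the simple roots `α_j`, `j ∈ J`. -/
def RootsJ (J : Finset ι) : Set E :=
  {a | a ∈ S.Roots ∧ a ∈ Submodule.span ℝ (S.simple '' ↑J)}

/-- `x` is `J`-dominant. -/
def IsJDominant (J : Finset ι) (x : E) : Prop := ∀ j ∈ J, 0 ≤ pairR x (S.simple j)

/-- `x` is `J`-minuscule: `⟨x, a∨⟩ ∈ {-1,0,1}` for all `a ∈ R_J`. -/
def IsJMinuscule (J : Finset ι) (x : E) : Prop :=
  ∀ a ∈ S.RootsJ J, pairR x a = -1 ∨ pairR x a = 0 ∨ pairR x a = 1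

/-- the action of a word `[i₁, …, i_t]` of simple reflections:
`s_{i₁} ∘ ⋯ ∘ s_{i_t}`. -/
def wordAct (l : List ι) : E → E :=
  l.foldr (fun i f => reflFun (S.simple i) ∘ f) id

/-- membership in the Weyl group `W` (generated by the simple reflections). -/
def InWeyl (w : E → E) : Prop := ∃ l : List ι, S.wordAct l = w

/-- the Weyl group orbit `W x`. -/
def weylOrbit (x : E) : Set E := {y | ∃ l : List ι, y = S.wordAct l x}

/-- a word is reduced if no shorter word gives the same Weyl group element. -/
def IsReducedWord (l : List ι) : Prop :=
  ∀ l' : List ι, S.wordAct l' = S.wordAct l → l.length ≤ l'.length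

/-- `w ∈ W` is `λ`-minuscule: some (equivalently, any) reduced expression
`w = s_{i₁} ⋯ s_{i_t}` satisfies
`⟨s_{i_{r+1}} ⋯ s_{i_t} λ, α_{i_r}∨⟩ = -1` for all `1 ≤ r ≤ t`. -/
def IsMinusculeFor (lam : E) (w : E → E) : Prop :=
  ∃ l : List ι, S.wordAct l = w ∧ S.IsReducedWord l ∧
    ∀ r : Fin l.length,
      pairR (S.wordAct (l.drop (r + 1)) lam) (S.simple (l.get r)) = -1

/-- the basis of simple roots. -/
def simpleBasis : Module.Basis ι ℝ E := Module.Basis.mk S.indep S.span_top.ge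

/-- `⟨x, ωᵢ⟩`: the pairing with the fundamental coweight `ωᵢ` dual to `αᵢ`,
i.e. the `i`-th coordinate of `x` in the basis of simple roots. -/
def coweightPair (x : E) (i : ι) : ℝ := S.simpleBasis.repr x i

end RootSystemCtx

/-!
Quasi-split setup: `X` is the cocharacter lattice of a root datum with reduced
root system `R = S.Roots`; since `E` is self-dual via the inner product, roots
and coroots both live in `E` and the pairing `⟨α, x⟩` of a root `α` with a
cocharacter `x` is the inner product. `σ` is a finite-order linear isometry of
`E` preserving `X` and permuting the simple roots (via a permutation `π` of
the index set). `Y = X/(1-σ)X` with projection `ρ`, and `Y ⊗ ℝ` is identified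
with the `σ`-invariants of `X ⊗ ℝ` via averaging over `⟨σ⟩`; accordingly
`ρ(x) = ρ(x')` iff `x - x' ∈ (1-σ)X = {u - σu : u ∈ X}`, and the image of
`ρ(x)` in the invariants is `avg x = n⁻¹ ∑_{k<n} σᵏ x`. The relative Weyl
group `W'` is the subgroup of `σ`-fixed elements of `W` (those commuting with
`σ`). -/

/-- the coroot `a∨ = 2a/(a,a)` of `a`. -/
def corootOf {E : Type} [NormedAddCommGroup E] [InnerProductSpace ℝ E] (a : E) : E :=
  (2 / (inner ℝ a a : ℝ)) • a

/-- the averaging map over `⟨σ⟩` (for `σ` of order dividing `n`), realizing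
the identification of `Y ⊗ ℝ` (resp. `Y_M ⊗ ℝ`) with `σ`-invariants. -/
def avgOf {E : Type} [NormedAddCommGroup E] [InnerProductSpace ℝ E]
    (σ : E ≃ₗᵢ[ℝ] E) (n : ℕ) (x : E) : E :=
  (n : ℝ)⁻¹ • ∑ k ∈ Finset.range n, (σ ^ k) x

/-- `𝔞_P`: the subspace of `σ`-invariant vectors annihilated by every simple
root `α_j`, `j ∈ J`. -/
def aPsub {ι E : Type} [Fintype ι] [DecidableEq ι]
    [NormedAddCommGroup E] [InnerProductSpace ℝ E]
    (S : RootSystemCtx ι E) (σ : E ≃ₗᵢ[ℝ] E) (J : Finset ι) : Submodule ℝ E where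
  carrier := {v : E | σ v = v ∧ ∀ j ∈ J, (inner ℝ (S.simple j) v : ℝ) = 0}
  add_mem' := by
    rintro a b ⟨ha1, ha2⟩ ⟨hb1, hb2⟩
    refine ⟨by rw [map_add, ha1, hb1], fun j hj => ?_⟩
    rw [inner_add_right, ha2 j hj, hb2 j hj, add_zero]
  zero_mem' := by
    refine ⟨map_zero σ, fun j hj => ?_⟩
    simp
  smul_mem' := by
    rintro c a ⟨ha1, ha2⟩
    refine ⟨by rw [map_smul, ha1], fun j hj => ?_⟩
    rw [inner_smul_right, ha2 j hj, mul_zero]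
namespace Stmt17

open Finset

variable {ι E : Type} [Fintype ι] [DecidableEq ι]
  [NormedAddCommGroup E] [InnerProductSpace ℝ E]

lemma inner_self_pos' {x : E} (h : x ≠ 0) : (0:ℝ) < inner ℝ x x :=
  lt_of_le_of_ne real_inner_self_nonneg
    (fun he => h ((@inner_self_eq_zero ℝ _ _ _ _ x).mp he.symm))

lemma pairR_sub_smul (x a b : E) (t : ℝ) :
    pairR (x - t • a) b = pairR x b - t * pairR a b := by
  unfold pairR
  rw [inner_sub_left, real_inner_smul_left]
  ring

lemma pairR_self (a : E) (ha : a ≠ 0) : pairR a a = 2 := by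
  unfold pairR
  have : (inner ℝ a a : ℝ) ≠ 0 := ne_of_gt (inner_self_pos' ha)
  field_simp

lemma reflFun_sub_smul (b x a : E) (t : ℝ) :
    reflFun b (x - t • a) = reflFun b x - t • reflFun b a := by
  unfold reflFun
  rw [pairR_sub_smul]
  module

lemma reflFun_invol (a x : E) (ha : a ≠ 0) : reflFun a (reflFun a x) = x := by
  unfold reflFun
  rw [pairR_sub_smul, pairR_self a ha]
  module

lemma reflFun_inner (a x y : E) (ha : a ≠ 0) :
    (inner ℝ (reflFun a x) (reflFun a y) : ℝ) = inner ℝ x y := by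
  unfold reflFun pairR
  have h : (inner ℝ a a : ℝ) ≠ 0 := ne_of_gt (inner_self_pos' ha)
  rw [inner_sub_left, inner_sub_right, inner_sub_right,
    real_inner_smul_left, real_inner_smul_left, real_inner_smul_right,
    real_inner_smul_right]
  rw [real_inner_comm a x, real_inner_comm a y] at *
  field_simp
  ring

lemma reflFun_iso (f : E ≃ₗᵢ[ℝ] E) (a x : E) :
    reflFun (f a) (f x) = f (reflFun a x) := by
  unfold reflFun pairR
  rw [f.inner_map_map, f.inner_map_map, map_sub, map_smul]

variable (S : RootSystemCtx ι E)

lemma simple_ne_zero (i : ι) : S.simple i ≠ 0 := S.ne_zero _ (S.simple_mem i)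

lemma wordAct_nil (x : E) : S.wordAct [] x = x := rfl

lemma wordAct_cons (i : ι) (l : List ι) (x : E) :
    S.wordAct (i :: l) x = reflFun (S.simple i) (S.wordAct l x) := rfl

lemma wordAct_append (l₁ l₂ : List ι) (x : E) :
    S.wordAct (l₁ ++ l₂) x = S.wordAct l₁ (S.wordAct l₂ x) := by
  induction l₁ with
  | nil => rfl
  | cons i l ih => simp [wordAct_cons, ih]

lemma wordAct_sub_smul (l : List ι) (x a : E) (t : ℝ) :
    S.wordAct l (x - t • a) = S.wordAct l x - t • S.wordAct l a := by
  induction l with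
  | nil => rfl
  | cons i l ih => rw [wordAct_cons, ih, reflFun_sub_smul, wordAct_cons, wordAct_cons]

lemma wordAct_inner (l : List ι) (x y : E) :
    (inner ℝ (S.wordAct l x) (S.wordAct l y) : ℝ) = inner ℝ x y := by
  induction l with
  | nil => rfl
  | cons i l ih =>
      rw [wordAct_cons, wordAct_cons, reflFun_inner _ _ _ (simple_ne_zero S i), ih]

lemma wordAct_left_inv (l : List ι) (x : E) :
    S.wordAct l.reverse (S.wordAct l x) = x := by
  induction l generalizing x with
  | nil => rfl
  | cons i l ih =>
      rw [wordAct_cons, List.reverse_cons, wordAct_append, wordAct_cons, wordAct_nil,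
        reflFun_invol _ _ (simple_ne_zero S i), ih]

lemma wordAct_right_inv (l : List ι) (x : E) :
    S.wordAct l (S.wordAct l.reverse x) = x := by
  have := wordAct_left_inv S l.reverse x
  rwa [List.reverse_reverse] at this

lemma reflFun_wordAct (l : List ι) (a x : E) :
    reflFun (S.wordAct l a) (S.wordAct l x) = S.wordAct l (reflFun a x) := by
  unfold reflFun pairR
  rw [wordAct_inner, wordAct_inner, ← wordAct_sub_smul]

lemma reflFun_word {γ : E} {l : List ι} {i : ι} (h : γ = S.wordAct l (S.simple i)) (x : E) :
    reflFun γ x = S.wordAct (l ++ i :: l.reverse) x := by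
  conv_lhs => rw [h, ← wordAct_right_inv S l x]
  rw [reflFun_wordAct, wordAct_append, wordAct_cons]

lemma roots_wordAct {a : E} (ha : a ∈ S.Roots) (l : List ι) : S.wordAct l a ∈ S.Roots := by
  induction l with
  | nil => exact ha
  | cons i l ih => exact S.refl_stable _ ih _ (S.simple_mem i)

lemma neg_root {a : E} (ha : a ∈ S.Roots) : -a ∈ S.Roots := by
  have h := S.refl_stable a ha a ha
  have : reflFun a a = -a := by
    unfold reflFun
    rw [pairR_self a (S.ne_zero a ha)]
    module
  rwa [this] at h

lemma simpleBasis_apply (i : ι) : S.simpleBasis i = S.simple i := Module.Basis.mk_apply _ _ _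

lemma repr_comb (c : ι → ℝ) (j : ι) :
    S.simpleBasis.repr (∑ i, c i • S.simple i) j = c j := by
  have h : ∑ i, c i • S.simple i = ∑ i, c i • S.simpleBasis i := by
    simp [simpleBasis_apply]
  rw [h, Module.Basis.repr_sum_self]

lemma repr_simple (i j : ι) :
    S.simpleBasis.repr (S.simple i) j = if i = j then 1 else 0 := by
  rw [← simpleBasis_apply, Module.Basis.repr_self, Finsupp.single_apply]

theorem decomp : ∀ N : ℕ, ∀ γ : E, ∀ c : ι → ℕ, γ ∈ S.Roots →
    γ = ∑ i, (c i : ℝ) • S.simple i → (∑ i, c i) = N →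
    ∃ (l : List ι) (j : ι), γ = S.wordAct l (S.simple j) := by
  intro N
  induction N using Nat.strong_induction_on with
  | _ N IH =>
    intro γ c hmem hcomb hsum
    by_cases hsi : ∃ j, γ = S.simple j
    · obtain ⟨j, hj⟩ := hsi
      exact ⟨[], j, hj⟩
    have hγ0 : γ ≠ 0 := S.ne_zero γ hmem
    have hγγ : (0:ℝ) < inner ℝ γ γ := inner_self_pos' hγ0
    have hsum_inner : (inner ℝ γ γ : ℝ) = ∑ i, (c i : ℝ) * (inner ℝ (S.simple i) γ : ℝ) := by
      nth_rewrite 1 [hcomb]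
      rw [sum_inner]
      exact Finset.sum_congr rfl fun i _ => real_inner_smul_left _ _ _
    have hex : ∃ i, 0 < (c i : ℝ) * (inner ℝ (S.simple i) γ : ℝ) := by
      by_contra hno
      push_neg at hno
      have : (inner ℝ γ γ : ℝ) ≤ 0 := by
        rw [hsum_inner]
        exact Finset.sum_nonpos fun i _ => hno i
      linarith
    obtain ⟨i, hi⟩ := hex
    have hinn : 0 < (inner ℝ (S.simple i) γ : ℝ) := by
      rcases lt_or_ge 0 (inner ℝ (S.simple i) γ : ℝ) with h | h
      · exact h
      · exfalso
        have : (c i : ℝ) * (inner ℝ (S.simple i) γ : ℝ) ≤ 0 :=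
          mul_nonpos_of_nonneg_of_nonpos (Nat.cast_nonneg _) h
        linarith
    -- the pairing p = ⟨γ, αᵢ∨⟩ is a positive integer m
    have hp : 0 < pairR γ (S.simple i) := by
      unfold pairR
      apply div_pos
      · rw [real_inner_comm]; linarith
      · exact inner_self_pos' (simple_ne_zero S i)
    obtain ⟨m, hm⟩ := S.crystal γ hmem (S.simple i) (S.simple_mem i)
    have hm1 : 1 ≤ m := by
      have : (0:ℝ) < m := hm ▸ hp
      exact_mod_cast this
    set δ := reflFun (S.simple i) γ with hδdef
    have hδmem : δ ∈ S.Roots := S.refl_stable γ hmem _ (S.simple_mem i)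
    have hδeq : δ = γ - (m:ℝ) • S.simple i := by
      rw [hδdef]
      unfold reflFun
      rw [hm]
    have hreprγ : ∀ j, S.simpleBasis.repr γ j = (c j : ℝ) := by
      intro j
      conv_lhs => rw [hcomb]
      exact repr_comb S _ j
    have hreprδ : ∀ j, S.simpleBasis.repr δ j = (c j : ℝ) - (m:ℝ) * (if i = j then 1 else 0) := by
      intro j
      rw [hδeq, map_sub, map_smul, Finsupp.sub_apply, Finsupp.smul_apply, hreprγ, repr_simple]
      simp
    rcases S.pos_neg δ hδmem with ⟨d, hd⟩ | ⟨d, hd⟩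
    · -- δ is a positive root of smaller height
      have hreprδ' : ∀ j, S.simpleBasis.repr δ j = (d j : ℝ) := by
        intro j
        conv_lhs => rw [hd]
        exact repr_comb S _ j
      have hdc : ∀ j, (d j : ℝ) = (c j : ℝ) - (m:ℝ) * (if i = j then 1 else 0) := by
        intro j
        rw [← hreprδ' j, hreprδ j]
      have hsumlt : (∑ j, d j) < N := by
        have hre : ((∑ j, d j : ℕ) : ℝ) = ((∑ j, c j : ℕ) : ℝ) - (m : ℝ) := by
          push_cast
          rw [Finset.sum_congr rfl fun j _ => hdc j, Finset.sum_sub_distrib]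
          congr 1
          rw [← Finset.mul_sum]
          simp
        have : ((∑ j, d j : ℕ) : ℝ) < ((∑ j, c j : ℕ) : ℝ) := by
          rw [hre]
          have : (1:ℝ) ≤ (m:ℝ) := by exact_mod_cast hm1
          linarith
        rw [hsum] at this
        exact_mod_cast this
      obtain ⟨l, j, hlj⟩ := IH _ hsumlt δ d hδmem hd rfl
      refine ⟨i :: l, j, ?_⟩
      have : γ = reflFun (S.simple i) δ := by
        rw [hδdef, reflFun_invol _ _ (simple_ne_zero S i)]
      rw [this, hlj, wordAct_cons]
    · -- δ negative forces γ = αᵢ, contradiction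
      exfalso
      have hreprδ' : ∀ j, S.simpleBasis.repr δ j = -(d j : ℝ) := by
        intro j
        conv_lhs => rw [hd]
        rw [map_neg, Finsupp.neg_apply, repr_comb]
      have hczero : ∀ j, j ≠ i → c j = 0 := by
        intro j hj
        have h1 := hreprδ j
        rw [hreprδ' j, if_neg (Ne.symm hj)] at h1
        have : (c j : ℝ) = -(d j : ℝ) := by linarith
        have h2 : (c j : ℝ) ≤ 0 := by
          have : (0:ℝ) ≤ (d j : ℝ) := Nat.cast_nonneg _
          linarith
        have h3 : (0:ℝ) ≤ (c j : ℝ) := Nat.cast_nonneg _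
        exact_mod_cast le_antisymm h2 h3
      have hγci : γ = (c i : ℝ) • S.simple i := by
        rw [hcomb]
        rw [Finset.sum_eq_single i]
        · intro j _ hj
          rw [hczero j hj]
          simp
        · intro h
          exact absurd (Finset.mem_univ i) h
      have := S.reduced (S.simple i) (S.simple_mem i) (c i : ℝ) (hγci ▸ hmem)
      rcases this with h1 | h1
      · exact hsi ⟨i, by rw [hγci, h1, one_smul]⟩
      · have : (0:ℝ) ≤ (c i : ℝ) := Nat.cast_nonneg _
        rw [h1] at this
        linarith

end Stmt17

namespace Stmt17

variable {ι E : Type} [Fintype ι] [DecidableEq ι]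
  [NormedAddCommGroup E] [InnerProductSpace ℝ E]
variable (S : RootSystemCtx ι E) (σ : E ≃ₗᵢ[ℝ] E)

lemma pow_apply_succ (k : ℕ) (x : E) : (σ ^ (k+1)) x = σ ((σ ^ k) x) := by
  rw [pow_succ']; rfl

lemma perm_pow_apply_succ (π : Equiv.Perm ι) (k : ℕ) (i : ι) :
    (π ^ (k+1)) i = π ((π ^ k) i) := by
  rw [pow_succ']; rfl

lemma sigma_wordAct (π : Equiv.Perm ι) (hσsimple : ∀ i, σ (S.simple i) = S.simple (π i))
    (l : List ι) (x : E) : σ (S.wordAct l x) = S.wordAct (l.map π) (σ x) := by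
  induction l with
  | nil => rfl
  | cons i l ih =>
      rw [wordAct_cons, ← reflFun_iso σ, ih, hσsimple, List.map_cons, wordAct_cons]

lemma sigma_root (π : Equiv.Perm ι) (hσsimple : ∀ i, σ (S.simple i) = S.simple (π i))
    {a : E} (ha : a ∈ S.Roots) : σ a ∈ S.Roots := by
  have key : ∀ b ∈ S.Roots, ∀ c : ι → ℕ, b = ∑ i, (c i : ℝ) • S.simple i → σ b ∈ S.Roots := by
    intro b hb c hc
    obtain ⟨l, j, hlj⟩ := decomp S _ b c hb hc rfl
    rw [hlj, sigma_wordAct S σ π hσsimple, hσsimple]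
    exact roots_wordAct S (S.simple_mem (π j)) _
  rcases S.pos_neg a ha with ⟨c, hc⟩ | ⟨c, hc⟩
  · exact key a ha c hc
  · have hna : -a ∈ S.Roots := neg_root S ha
    have hnc : -a = ∑ i, (c i : ℝ) • S.simple i := by rw [hc, neg_neg]
    have := key (-a) hna c hnc
    rw [map_neg] at this
    have := neg_root S this
    rwa [neg_neg] at this

lemma sigma_pow_root (π : Equiv.Perm ι) (hσsimple : ∀ i, σ (S.simple i) = S.simple (π i))
    {a : E} (ha : a ∈ S.Roots) (k : ℕ) : (σ ^ k) a ∈ S.Roots := by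
  induction k with
  | zero => simpa using ha
  | succ k ih => rw [pow_apply_succ]; exact sigma_root S σ π hσsimple ih

lemma sigma_pow_simple (π : Equiv.Perm ι) (hσsimple : ∀ i, σ (S.simple i) = S.simple (π i))
    (k : ℕ) (i : ι) : (σ ^ k) (S.simple i) = S.simple ((π ^ k) i) := by
  induction k with
  | zero => rfl
  | succ k ih => rw [pow_apply_succ, ih, hσsimple, perm_pow_apply_succ]

variable (n : ℕ)

lemma avg_smul (t : ℝ) (x : E) : avgOf σ n (t • x) = t • avgOf σ n x := by
  unfold avgOf
  simp only [map_smul, ← Finset.smul_sum]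
  rw [smul_comm]

lemma avg_sub (x y : E) : avgOf σ n (x - y) = avgOf σ n x - avgOf σ n y := by
  unfold avgOf
  simp only [map_sub, Finset.sum_sub_distrib, smul_sub]

lemma sigma_avg (hσn : σ ^ n = 1) (x : E) : σ (avgOf σ n x) = avgOf σ n x := by
  unfold avgOf
  rw [map_smul, map_sum]
  congr 1
  have hf : ∀ k, σ ((σ ^ k) x) = (σ ^ (k+1)) x := fun k => (pow_apply_succ σ k x).symm
  have hfn : (σ ^ n) x = (σ ^ 0) x := by rw [hσn, pow_zero]
  calc ∑ k ∈ Finset.range n, σ ((σ ^ k) x)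
      = ∑ k ∈ Finset.range n, (σ ^ (k+1)) x := Finset.sum_congr rfl fun k _ => hf k
    _ = ∑ k ∈ Finset.range n, (σ ^ k) x := by
        have h2 := Finset.sum_range_succ' (fun k => (σ ^ k) x) n
        have h3 := Finset.sum_range_succ (fun k => (σ ^ k) x) n
        have h4 := h2.symm.trans h3
        rw [hfn] at h4
        simpa using add_right_cancel h4

lemma sigma_pow_fix {w : E} (hw : σ w = w) (k : ℕ) : (σ ^ k) w = w := by
  induction k with
  | zero => rfl
  | succ k ih => rw [pow_apply_succ, ih, hw]

lemma inner_avg_left (hn : 0 < n) {w : E} (hw : σ w = w) (x : E) :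
    (inner ℝ (avgOf σ n x) w : ℝ) = inner ℝ x w := by
  unfold avgOf
  rw [real_inner_smul_left, sum_inner]
  have : ∀ k ∈ Finset.range n, (inner ℝ ((σ ^ k) x) w : ℝ) = inner ℝ x w := by
    intro k _
    conv_lhs => rw [← sigma_pow_fix σ hw k]
    exact (σ ^ k).inner_map_map x w
  rw [Finset.sum_congr rfl this, Finset.sum_const, Finset.card_range, nsmul_eq_mul]
  have hne : (n : ℝ) ≠ 0 := Nat.cast_ne_zero.mpr hn.ne'
  field_simp

end Stmt17

/-- (quasi-split, `R` simply-laced) Let `μ ∈ X` be dominant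
and let `β∨ = ρ(γ₀∨)` be a positive coroot of the relative coroot system `R'`
(`γ₀` a positive coroot of `R`) such that `ν' = ρ(μ) - β∨` is dominant, i.e.
its image `avg(μ - γ₀∨)` in the `σ`-invariants of `X ⊗ ℝ` pairs nonnegatively
with every simple root. Then there exists `ν ∈ 𝒫_μ` with
`ρ(ν) = ρ(μ) - β∨`, i.e. `ν - (μ - γ₀∨) ∈ (1-σ)X`. -/
theorem exists_nu_in_P_mu_lifting
    {ι E : Type} [Fintype ι] [DecidableEq ι]
    [NormedAddCommGroup E] [InnerProductSpace ℝ E]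
    (S : RootSystemCtx ι E) (hSL : S.SimplyLaced)
    (X : AddSubgroup E)
    (hXcor : ∀ a ∈ S.Roots, corootOf a ∈ X)
    (hXint : ∀ a ∈ S.Roots, ∀ x ∈ X, ∃ m : ℤ, (inner ℝ a x : ℝ) = m)
    (σ : E ≃ₗᵢ[ℝ] E) (n : ℕ) (hn : 0 < n) (hσn : σ ^ n = 1)
    (hσX : ∀ x ∈ X, σ x ∈ X)
    (π : Equiv.Perm ι) (hσsimple : ∀ i, σ (S.simple i) = S.simple (π i))
    (μ : E) (hμX : μ ∈ X) (hμdom : ∀ i : ι, 0 ≤ (inner ℝ (S.simple i) μ : ℝ))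
    (γ₀ : E) (hγ₀ : S.IsPositiveRoot γ₀)
    (hν'dom : ∀ i : ι, 0 ≤ (inner ℝ (S.simple i) (avgOf σ n (μ - corootOf γ₀)) : ℝ)) :
    ∃ ν : E, ν ∈ X ∧
      ν - μ ∈ AddSubgroup.closure {v : E | ∃ a ∈ S.Roots, v = corootOf a} ∧
      ν ∈ convexHull ℝ (S.weylOrbit μ) ∧
      ∃ u ∈ X, ν - (μ - corootOf γ₀) = u - σ u := by
  classical
  open Stmt17 in
  obtain ⟨hγ₀R, c0, hc0⟩ := hγ₀
  have hγ₀ne : γ₀ ≠ 0 := S.ne_zero _ hγ₀R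
  have hc0c : (0:ℝ) < inner ℝ γ₀ γ₀ := inner_self_pos' hγ₀ne
  -- the coordinate-sum functional
  set hfun : E →ₗ[ℝ] ℝ :=
    { toFun := fun x => ∑ i, S.simpleBasis.repr x i
      map_add' := by intro x y; simp [Finset.sum_add_distrib]
      map_smul' := by intro t x; simp [Finset.mul_sum] } with hfundef
  have hfun_simple : ∀ j, hfun (S.simple j) = 1 := by
    intro j
    simp only [hfundef, LinearMap.coe_mk, AddHom.coe_mk]
    rw [Finset.sum_congr rfl fun i _ => repr_simple S j i]
    simp
  have hc0pos : (0:ℝ) < ∑ i, (c0 i : ℝ) := by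
    have hne : ∃ i, c0 i ≠ 0 := by
      by_contra hno
      push_neg at hno
      apply hγ₀ne
      rw [hc0]
      apply Finset.sum_eq_zero
      intro i _
      rw [hno i]
      simp
    obtain ⟨i, hi⟩ := hne
    have : (0:ℝ) < (c0 i : ℝ) := by exact_mod_cast Nat.pos_of_ne_zero hi
    have hnn : ∀ j ∈ Finset.univ, (0:ℝ) ≤ (c0 j : ℝ) := fun j _ => Nat.cast_nonneg _
    exact Finset.sum_pos' hnn ⟨i, Finset.mem_univ i, this⟩
  have hcombk : ∀ k : ℕ, (σ ^ k) γ₀ = ∑ i, (c0 i : ℝ) • S.simple ((π ^ k) i) := by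
    intro k
    rw [hc0, map_sum]
    exact Finset.sum_congr rfl fun i _ => by
      rw [map_smul, sigma_pow_simple S σ π hσsimple k i]
  have hfk : ∀ k : ℕ, hfun ((σ ^ k) γ₀) = ∑ i, (c0 i : ℝ) := by
    intro k
    rw [hcombk k, map_sum]
    exact Finset.sum_congr rfl fun i _ => by
      rw [map_smul, hfun_simple]
      simp
  have hAγ₀fun : hfun (avgOf σ n γ₀) = ∑ i, (c0 i : ℝ) := by
    unfold avgOf
    rw [map_smul, map_sum, Finset.sum_congr rfl fun k _ => hfk k, Finset.sum_const,
      Finset.card_range, nsmul_eq_mul, smul_eq_mul]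
    have hne : (n : ℝ) ≠ 0 := Nat.cast_ne_zero.mpr hn.ne'
    field_simp
  have hAγ₀ne : avgOf σ n γ₀ ≠ 0 := by
    intro h
    rw [h, map_zero] at hAγ₀fun
    linarith
  -- positivity of ⟨γ₀, avg γ₀∨⟩
  have hAinv : ∀ x, σ (avgOf σ n x) = avgOf σ n x := fun x => sigma_avg σ n hσn x
  have hAv0 : avgOf σ n (corootOf γ₀) = (2 / (inner ℝ γ₀ γ₀ : ℝ)) • avgOf σ n γ₀ := by
    unfold corootOf
    exact avg_smul σ n _ _
  have h2 : (0:ℝ) < inner ℝ γ₀ (avgOf σ n (corootOf γ₀)) := by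
    have he : (inner ℝ (avgOf σ n γ₀) (avgOf σ n (corootOf γ₀)) : ℝ)
        = inner ℝ γ₀ (avgOf σ n (corootOf γ₀)) :=
      inner_avg_left σ n hn (hAinv _) γ₀
    rw [← he, hAv0, real_inner_smul_right]
    have := inner_self_pos' hAγ₀ne
    positivity
  -- nonnegativity from hν'dom
  have h0 : (0:ℝ) ≤ inner ℝ γ₀ (avgOf σ n (μ - corootOf γ₀)) := by
    have heq : (inner ℝ γ₀ (avgOf σ n (μ - corootOf γ₀)) : ℝ)
        = ∑ i, (c0 i : ℝ) * (inner ℝ (S.simple i) (avgOf σ n (μ - corootOf γ₀)) : ℝ) := by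
      nth_rewrite 1 [hc0]
      rw [sum_inner]
      exact Finset.sum_congr rfl fun i _ => real_inner_smul_left _ _ _
    rw [heq]
    exact Finset.sum_nonneg fun i _ => mul_nonneg (Nat.cast_nonneg _) (hν'dom i)
  have h3 : (0:ℝ) < inner ℝ γ₀ (avgOf σ n μ) := by
    rw [avg_sub, inner_sub_right] at h0
    linarith
  have h4 : (0:ℝ) < inner ℝ (avgOf σ n γ₀) μ := by
    have e1 : (inner ℝ (avgOf σ n γ₀) μ : ℝ) = inner ℝ (avgOf σ n μ) (avgOf σ n γ₀) := by
      rw [inner_avg_left σ n hn (hAinv γ₀) μ, real_inner_comm]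
    have e2 : (inner ℝ (avgOf σ n μ) (avgOf σ n γ₀) : ℝ) = inner ℝ γ₀ (avgOf σ n μ) := by
      rw [real_inner_comm, inner_avg_left σ n hn (hAinv μ) γ₀]
    rw [e1, e2]
    exact h3
  have h5 : (0:ℝ) < ∑ k ∈ Finset.range n, (inner ℝ ((σ ^ k) γ₀) μ : ℝ) := by
    have he : (inner ℝ (avgOf σ n γ₀) μ : ℝ)
        = (n : ℝ)⁻¹ * ∑ k ∈ Finset.range n, (inner ℝ ((σ ^ k) γ₀) μ : ℝ) := by
      unfold avgOf
      rw [real_inner_smul_left, sum_inner]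
    by_contra hS
    push_neg at hS
    have : (inner ℝ (avgOf σ n γ₀) μ : ℝ) ≤ 0 := by
      rw [he]
      have : (0:ℝ) ≤ (n:ℝ)⁻¹ := by positivity
      exact mul_nonpos_of_nonneg_of_nonpos this hS
    linarith
  obtain ⟨k, -, hkpos⟩ : ∃ k ∈ Finset.range n, (0:ℝ) < inner ℝ ((σ ^ k) γ₀) μ := by
    by_contra hno
    push_neg at hno
    exact absurd (Finset.sum_nonpos hno) (not_le.mpr h5)
  set γ : E := (σ ^ k) γ₀ with hγdef
  have hγR : γ ∈ S.Roots := sigma_pow_root S σ π hσsimple hγ₀R k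
  have hγne : γ ≠ 0 := S.ne_zero γ hγR
  have hγγ : (0:ℝ) < inner ℝ γ γ := inner_self_pos' hγne
  have hγcomb : γ = ∑ j, ((fun j => c0 ((π ^ k)⁻¹ j)) j : ℝ) • S.simple j := by
    rw [hγdef, hcombk k,
      ← Equiv.sum_comp (π ^ k : Equiv.Perm ι)
        (fun j => ((c0 ((π ^ k)⁻¹ j) : ℕ) : ℝ) • S.simple j)]
    exact Finset.sum_congr rfl fun i _ => by simp
  have h1γμ : (1:ℝ) ≤ inner ℝ γ μ := by
    obtain ⟨m, hm⟩ := hXint γ hγR μ hμX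
    have : (0:ℝ) < m := hm ▸ hkpos
    have : (1:ℤ) ≤ m := by exact_mod_cast this
    rw [hm]
    exact_mod_cast this
  refine ⟨μ - corootOf γ, X.sub_mem hμX (hXcor γ hγR), ?_, ?_, ?_⟩
  · have heq : μ - corootOf γ - μ = -(corootOf γ) := by abel
    rw [heq]
    exact neg_mem (AddSubgroup.subset_closure ⟨γ, hγR, rfl⟩)
  · -- convexity
    obtain ⟨l, j, hw⟩ := decomp S _ γ _ hγR hγcomb rfl
    have hμmem : μ ∈ S.weylOrbit μ := ⟨[], rfl⟩
    have hrmem : reflFun γ μ ∈ S.weylOrbit μ := ⟨l ++ j :: l.reverse, reflFun_word S hw μ⟩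
    set t : ℝ := (inner ℝ γ μ : ℝ)⁻¹ with htdef
    have ht0 : 0 ≤ t := by positivity
    have ht1 : t ≤ 1 := by
      rw [htdef]
      exact inv_le_one_of_one_le₀ h1γμ
    have hμγne : (inner ℝ γ μ : ℝ) ≠ 0 := by linarith
    have hcomboeq : (1 - t) • μ + t • reflFun γ μ = μ - corootOf γ := by
      unfold reflFun corootOf
      have hstep : (1 - t) • μ + t • (μ - pairR μ γ • γ) = μ - (t * pairR μ γ) • γ := by
        module
      rw [hstep]
      have : t * pairR μ γ = 2 / (inner ℝ γ γ : ℝ) := by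
        unfold pairR
        have hb : (inner ℝ γ γ : ℝ) ≠ 0 := ne_of_gt hγγ
        have ha2 : (inner ℝ μ γ : ℝ) ≠ 0 := by rw [real_inner_comm]; exact hμγne
        rw [htdef, real_inner_comm γ μ]
        field_simp
      rw [this]
    have := (convex_convexHull ℝ (S.weylOrbit μ))
      (subset_convexHull ℝ _ hμmem) (subset_convexHull ℝ _ hrmem)
      (by linarith : (0:ℝ) ≤ 1 - t) ht0 (by ring)
    rwa [hcomboeq] at this
  · -- (1-σ)X part
    have hXpow : ∀ (j : ℕ) (x : E), x ∈ X → (σ ^ j) x ∈ X := by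
      intro j
      induction j with
      | zero => intro x hx; simpa using hx
      | succ j ih =>
          intro x hx
          rw [pow_apply_succ]
          exact hσX _ (ih x hx)
    refine ⟨∑ j ∈ Finset.range k, (σ ^ j) (corootOf γ₀),
      AddSubgroup.sum_mem X fun j _ => hXpow j _ (hXcor γ₀ hγ₀R), ?_⟩
    have hcor : corootOf γ = (σ ^ k) (corootOf γ₀) := by
      unfold corootOf
      rw [hγdef, (σ ^ k).inner_map_map, map_smul]
    have hσsum : σ (∑ j ∈ Finset.range k, (σ ^ j) (corootOf γ₀))
        = ∑ j ∈ Finset.range k, (σ ^ (j+1)) (corootOf γ₀) := by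
      rw [map_sum]
      exact Finset.sum_congr rfl fun j _ => (pow_apply_succ σ j _).symm
    rw [hσsum, hcor]
    have htel := Finset.sum_range_sub (fun j => (σ ^ j) (corootOf γ₀)) k
    have : ∑ j ∈ Finset.range k, (σ ^ j) (corootOf γ₀)
        - ∑ j ∈ Finset.range k, (σ ^ (j+1)) (corootOf γ₀)
        = (σ ^ 0) (corootOf γ₀) - (σ ^ k) (corootOf γ₀) := by
      rw [← Finset.sum_sub_distrib]
      have hneg : ∀ j ∈ Finset.range k,
          (σ ^ j) (corootOf γ₀) - (σ ^ (j+1)) (corootOf γ₀)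
          = -((σ ^ (j+1)) (corootOf γ₀) - (σ ^ j) (corootOf γ₀)) :=
        fun j _ => by abel
      rw [Finset.sum_congr rfl hneg, Finset.sum_neg_distrib, htel, neg_sub]
    rw [this]
    have h00 : (σ ^ 0) (corootOf γ₀) = corootOf γ₀ := rfl
    rw [h00]
    abel
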